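/- One has −c_1^0 − ∑_{i=1}^{2k+1} b_2^i + c_2^0 > 0, where c_1^0 = (l·(m*)²/D)·I(2k+2, 2(2k+1)l+2), b_2^i = (m*/D)·((2k+1)!/P(2k+1))·(P(i)/i!)·I(2i, 2(k+1)l+2), and c_2^0 = (1/D)·((2k+1)!/P(2k+1))·P(0)·I(2k+2, 2). -/

import Mathlib

/-- The critical value m* = ∏_{j=0}^{k} (2j+1)/(2jl+1). -/
noncomputable def mStar (l k : ℕ) : ℝ :=
  ∏ j ∈ Finset.range (k + 1), (2 * (j : ℝ) + 1) / (2 * (j : ℝ) * (l : ℝ) + 1)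

/-- D = 2(2k+1)l + 2. -/
noncomputable def Dd (l k : ℕ) : ℝ := 2 * (2 * (k : ℝ) + 1) * (l : ℝ) + 2

/-- P(i) = ∏_{j=0}^{i-1} (jl + 1), with P(0) = 1. -/
noncomputable def Pp (l i : ℕ) : ℝ := ∏ j ∈ Finset.range i, ((j : ℝ) * (l : ℝ) + 1)

/-- I(a,b) = (2/l^{(a+1)/2})·Γ((a+1)/2)·Γ((b+1)/(2l))/Γ((a+1)/2 + (b+1)/(2l)),
the value of ∫_0^Ω Sn^a Cs^b dθ for even a, b. -/
noncomputable def Ii (l a b : ℕ) : ℝ :=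
  2 / (l : ℝ) ^ (((a : ℝ) + 1) / 2) * Real.Gamma (((a : ℝ) + 1) / 2) *
    Real.Gamma (((b : ℝ) + 1) / (2 * (l : ℝ))) /
    Real.Gamma (((a : ℝ) + 1) / 2 + ((b : ℝ) + 1) / (2 * (l : ℝ)))


open Finset Real

set_option maxHeartbeats 1600000

private theorem gamma_shift (x : ℝ) (hx : 0 < x) (n : ℕ) :
    Real.Gamma (x + n) = (∏ j ∈ Finset.range n, (x + j)) * Real.Gamma x := by
  induction n with
  | zero => simp
  | succ n ih =>
    have h : x + (n:ℝ) ≠ 0 := by positivity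
    have h2 : x + ((n:ℕ)+1:ℕ) = (x + n) + 1 := by push_cast; ring
    rw [h2, Real.Gamma_add_one h, Finset.prod_range_succ, ih]; ring

private theorem fact_prod (n : ℕ) :
    ((Nat.factorial n : ℕ) : ℝ) = ∏ j ∈ Finset.range n, ((j:ℝ) + 1) := by
  induction n with
  | zero => simp
  | succ n ih => rw [Finset.prod_range_succ, ← ih]; push_cast [Nat.factorial_succ]; ring

private theorem Qbound (k : ℕ) :
    ∏ j ∈ Finset.range k, ((4*((j:ℝ)+1)+3)/(4*((j:ℝ)+1)+1)) ≤ (4*(k:ℝ)+9)/9 := by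
  induction k with
  | zero => norm_num
  | succ k ih =>
    rw [Finset.prod_range_succ]
    have h1 : (0:ℝ) < 4*((k:ℝ)+1)+1 := by positivity
    have h2 : ((4*((k:ℝ)+1)+3)/(4*((k:ℝ)+1)+1)) ≤ (4*((k:ℝ)+1)+9)/(4*(k:ℝ)+9) := by
      rw [div_le_div_iff₀ h1 (by positivity)]
      nlinarith [sq_nonneg (k:ℝ)]
    have hpos : (0:ℝ) ≤ ∏ j ∈ Finset.range k, ((4*((j:ℝ)+1)+3)/(4*((j:ℝ)+1)+1)) :=
      Finset.prod_nonneg fun j _ => by positivity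
    have h3 := mul_le_mul ih h2 (by positivity) (by positivity : (0:ℝ) ≤ (4*(k:ℝ)+9)/9)
    calc (∏ j ∈ Finset.range k, ((4*((j:ℝ)+1)+3)/(4*((j:ℝ)+1)+1))) * ((4*((k:ℝ)+1)+3)/(4*((k:ℝ)+1)+1))
        ≤ ((4*(k:ℝ)+9)/9) * ((4*((k:ℝ)+1)+9)/(4*(k:ℝ)+9)) := h3
      _ = (4*((k:ℝ)+1)+9)/9 := by field_simp
      _ = (4*(((k:ℕ)+1:ℕ):ℝ)+9)/9 := by push_cast; ring

private theorem key_poly (j k : ℝ) (h1 : 1 ≤ j) (hjk : j ≤ k) :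
    3*(2*j+1)^3*(j+k)*(4*j+3) ≤ 2*j*(4*j+1)*(j+1)*(2*j+2*k+3)*(2*j+4*k+3) := by
  nlinarith [sq_nonneg (k-j), sq_nonneg j, sq_nonneg k,
    mul_nonneg (sub_nonneg.2 hjk) (sub_nonneg.2 h1),
    mul_nonneg (mul_nonneg (sub_nonneg.2 hjk) (sub_nonneg.2 h1)) (sub_nonneg.2 h1),
    sq_nonneg ((k-j)*j), mul_nonneg (sub_nonneg.2 hjk) (sq_nonneg j)]

private theorem bracket_le (j k L s : ℝ) (h1 : 1 ≤ j) (hjk : j ≤ k) (hL : 2 ≤ L)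
    (hs : 0 < s) (hs34 : s ≤ 3/4) :
    ((2*j+1)/(2*j*L+1))^2 * ((j*L+1)/(j+1)) * ((s+j)/(k+3/2+s+j)) *
      (((j+k)*L+1)/(j+k+1)) * ((s+j+k)/(k+3/2+s+j+k)) ≤ 1/3 := by
  have hk1 : 1 ≤ k := le_trans h1 hjk
  have hL0 : (0:ℝ) < L := by linarith
  have hd1 : (0:ℝ) < 2*j*L+1 := by nlinarith
  have e1 : ((2*j+1)/(2*j*L+1))^2 * ((j*L+1)/(j+1)) * ((s+j)/(k+3/2+s+j)) *
      (((j+k)*L+1)/(j+k+1)) * ((s+j+k)/(k+3/2+s+j+k))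
      = ((j*L+1)/(2*j*L+1)) * (((j+k)*L+1)/(2*j*L+1)) * ((s+j)/(k+3/2+s+j)) *
        ((s+j+k)/(j+k+1)) * ((2*j+1)^2/(j+1)) * (1/(k+3/2+s+j+k)) := by
    field_simp
  rw [e1]
  have b1 : (j*L+1)/(2*j*L+1) ≤ (2*j+1)/(4*j+1) := by
    rw [div_le_div_iff₀ hd1 (by positivity)]; nlinarith
  have b2 : ((j+k)*L+1)/(2*j*L+1) ≤ (j+k)/(2*j) := by
    rw [div_le_div_iff₀ hd1 (by positivity)]; nlinarith
  have b3 : (s+j)/(k+3/2+s+j) ≤ (j+3/4)/(j+k+3/2) := by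
    rw [div_le_div_iff₀ (by linarith) (by linarith)]; nlinarith
  have b4 : (s+j+k)/(j+k+1) ≤ 1 := by
    rw [div_le_one (by linarith)]; linarith
  have b5 : 1/(k+3/2+s+j+k) ≤ 1/(j+2*k+3/2) := by
    apply one_div_le_one_div_of_le (by linarith) (by linarith)
  have final : (2*j+1)/(4*j+1) * ((j+k)/(2*j)) * ((j+3/4)/(j+k+3/2)) * 1 *
      ((2*j+1)^2/(j+1)) * (1/(j+2*k+3/2)) ≤ 1/3 := by
    rw [div_mul_div_comm, div_mul_div_comm, mul_one, div_mul_div_comm, div_mul_div_comm,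
      div_le_div_iff₀ (by positivity) (by norm_num)]
    nlinarith [key_poly j k h1 hjk]
  calc ((j*L+1)/(2*j*L+1)) * (((j+k)*L+1)/(2*j*L+1)) * ((s+j)/(k+3/2+s+j)) *
        ((s+j+k)/(j+k+1)) * ((2*j+1)^2/(j+1)) * (1/(k+3/2+s+j+k))
      ≤ (2*j+1)/(4*j+1) * ((j+k)/(2*j)) * ((j+3/4)/(j+k+3/2)) * 1 *
        ((2*j+1)^2/(j+1)) * (1/(j+2*k+3/2)) := by
        gcongr ?_ * ?_ * ?_ * ?_ * ?_ * ?_ <;>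
          first
          | exact b1 | exact b2 | exact b3 | exact b4 | exact b5
          | exact le_rfl | positivity
    _ ≤ 1/3 := final

private noncomputable def Bi (l k i : ℕ) : ℝ :=
  mStar l k * ((Nat.factorial (2*k+1) : ℝ)/Pp l (2*k+1)) * (Pp l i/(Nat.factorial i : ℝ)) *
    Ii l (2*i) (2*(k+1)*l+2)

private noncomputable def Cc (l k : ℕ) : ℝ :=
  ((Nat.factorial (2*k+1):ℝ)/Pp l (2*k+1)) * Ii l (2*k+2) 2

private theorem Pp_pos (l n : ℕ) : 0 < Pp l n :=
  Finset.prod_pos fun j _ => by positivity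

private theorem mStar_pos (l k : ℕ) : 0 < mStar l k :=
  Finset.prod_pos fun j _ => by positivity

private theorem Ii_pos (l a b : ℕ) (hl : 1 ≤ l) : 0 < Ii l a b := by
  have hL : (0:ℝ) < l := by exact_mod_cast Nat.lt_of_lt_of_le Nat.zero_lt_one hl
  unfold Ii
  have g1 : 0 < Real.Gamma (((a : ℝ) + 1) / 2) := Real.Gamma_pos_of_pos (by positivity)
  have g2 : 0 < Real.Gamma (((b : ℝ) + 1) / (2 * (l:ℝ))) := Real.Gamma_pos_of_pos (by positivity)
  have g3 : 0 < Real.Gamma (((a : ℝ) + 1) / 2 + ((b : ℝ) + 1) / (2 * (l:ℝ))) :=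
    Real.Gamma_pos_of_pos (by positivity)
  have h4 : (0:ℝ) < (l:ℝ) ^ (((a : ℝ) + 1) / 2) := Real.rpow_pos_of_pos hL _
  positivity

private theorem Bi_pos (l k i : ℕ) (hl : 1 ≤ l) : 0 < Bi l k i := by
  unfold Bi
  have := Ii_pos l (2*i) (2*(k+1)*l+2) hl
  have := Pp_pos l (2*k+1); have := Pp_pos l i; have := mStar_pos l k
  have f1 : (0:ℝ) < (Nat.factorial (2*k+1) : ℝ) := by positivity
  have f2 : (0:ℝ) < (Nat.factorial i : ℝ) := by positivity
  positivity

private theorem Cc_pos (l k : ℕ) (hl : 1 ≤ l) : 0 < Cc l k := by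
  unfold Cc
  have := Ii_pos l (2*k+2) 2 hl
  have := Pp_pos l (2*k+1)
  have f1 : (0:ℝ) < (Nat.factorial (2*k+1) : ℝ) := by positivity
  positivity

private theorem Bi_succ (l k i : ℕ) (hl : 2 ≤ l) :
    Bi l k (i+1) = Bi l k i * (((i:ℝ)*(l:ℝ)+1)/((l:ℝ)*((i:ℝ)+1))) *
      (((i:ℝ)+1/2)/((i:ℝ)+1/2+((k:ℝ)+1)+3/(2*(l:ℝ)))) := by
  have hL : (0:ℝ) < (l:ℝ) := by exact_mod_cast Nat.lt_of_lt_of_le Nat.zero_lt_two hl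
  have ca1 : ((((2*(i+1) : ℕ)):ℝ)+1)/2 = ((i:ℝ)+1/2)+1 := by push_cast; ring
  have ca0 : ((((2*i : ℕ)):ℝ)+1)/2 = (i:ℝ)+1/2 := by push_cast; ring
  have cb : ((((2*(k+1)*l+2 : ℕ)):ℝ)+1)/(2*(l:ℝ)) = ((k:ℝ)+1)+3/(2*(l:ℝ)) := by
    push_cast; field_simp; ring
  have hs : (0:ℝ) < 3/(2*(l:ℝ)) := by positivity
  have hi2 : (0:ℝ) < (i:ℝ)+1/2 := by positivity
  have hib : (0:ℝ) < (i:ℝ)+1/2+(((k:ℝ)+1)+3/(2*(l:ℝ))) := by positivity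
  have hrw1 : Real.Gamma (((i:ℝ)+1/2)+1) = ((i:ℝ)+1/2) * Real.Gamma ((i:ℝ)+1/2) :=
    Real.Gamma_add_one (ne_of_gt hi2)
  have harg : ((i:ℝ)+1/2)+1 + (((k:ℝ)+1)+3/(2*(l:ℝ)))
      = (((i:ℝ)+1/2) + (((k:ℝ)+1)+3/(2*(l:ℝ)))) + 1 := by ring
  have hrw2 : Real.Gamma (((i:ℝ)+1/2)+1 + (((k:ℝ)+1)+3/(2*(l:ℝ))))
      = (((i:ℝ)+1/2) + (((k:ℝ)+1)+3/(2*(l:ℝ)))) *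
        Real.Gamma (((i:ℝ)+1/2) + (((k:ℝ)+1)+3/(2*(l:ℝ)))) := by
    rw [harg, Real.Gamma_add_one (ne_of_gt hib)]
  have hpow : (l:ℝ) ^ (((i:ℝ)+1/2)+1) = (l:ℝ) ^ ((i:ℝ)+1/2) * (l:ℝ) :=
    Real.rpow_add_one (ne_of_gt hL) _
  have hPp : Pp l (i+1) = Pp l i * ((i:ℝ)*(l:ℝ)+1) := Finset.prod_range_succ _ i
  have hfac : ((Nat.factorial (i+1) : ℕ):ℝ) = ((i:ℝ)+1) * (Nat.factorial i : ℝ) := by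
    push_cast [Nat.factorial_succ]; ring
  unfold Bi Ii
  rw [ca1, ca0, cb, hrw1, hrw2, hpow, hPp, hfac]
  have g1 : 0 < Real.Gamma ((i:ℝ)+1/2) := Real.Gamma_pos_of_pos hi2
  have g2 : 0 < Real.Gamma (((k:ℝ)+1)+3/(2*(l:ℝ))) := Real.Gamma_pos_of_pos (by positivity)
  have g3 : 0 < Real.Gamma (((i:ℝ)+1/2) + (((k:ℝ)+1)+3/(2*(l:ℝ)))) :=
    Real.Gamma_pos_of_pos (by positivity)
  have hp : (0:ℝ) < (l:ℝ) ^ ((i:ℝ)+1/2) := Real.rpow_pos_of_pos hL _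
  have f2 : (0:ℝ) < (Nat.factorial i : ℝ) := by positivity
  field_simp
  ring

private theorem Bi_ratio (l k i : ℕ) (hl : 2 ≤ l) (hk : 1 ≤ k) (hi : 1 ≤ i) :
    Bi l k (i+1) ≤ (2*(i:ℝ)+1)/(2*(i:ℝ)+5) * Bi l k i := by
  have hL : (2:ℝ) ≤ (l:ℝ) := by exact_mod_cast hl
  have hL0 : (0:ℝ) < (l:ℝ) := by linarith
  have hs : (0:ℝ) < 3/(2*(l:ℝ)) := by positivity
  have hkr : (1:ℝ) ≤ (k:ℝ) := by exact_mod_cast hk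
  have hBpos := Bi_pos l k i (le_trans one_le_two hl)
  rw [Bi_succ l k i hl]
  have r1 : ((i:ℝ)*(l:ℝ)+1)/((l:ℝ)*((i:ℝ)+1)) ≤ 1 := by
    rw [div_le_one (by positivity)]; nlinarith
  have r2 : ((i:ℝ)+1/2)/((i:ℝ)+1/2+((k:ℝ)+1)+3/(2*(l:ℝ))) ≤ (2*(i:ℝ)+1)/(2*(i:ℝ)+5) := by
    rw [div_le_div_iff₀ (by positivity) (by positivity)]; nlinarith
  calc Bi l k i * (((i:ℝ)*(l:ℝ)+1)/((l:ℝ)*((i:ℝ)+1))) *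
        (((i:ℝ)+1/2)/((i:ℝ)+1/2+((k:ℝ)+1)+3/(2*(l:ℝ))))
      ≤ Bi l k i * 1 * ((2*(i:ℝ)+1)/(2*(i:ℝ)+5)) := by gcongr <;> positivity
    _ = (2*(i:ℝ)+1)/(2*(i:ℝ)+5) * Bi l k i := by ring

private theorem Bi_two (l k : ℕ) (hl : 2 ≤ l) (hk : 1 ≤ k) :
    Bi l k 2 ≤ 9/28 * Bi l k 1 := by
  have hL : (2:ℝ) ≤ (l:ℝ) := by exact_mod_cast hl
  have hL0 : (0:ℝ) < (l:ℝ) := by linarith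
  have hs : (0:ℝ) < 3/(2*(l:ℝ)) := by positivity
  have hkr : (1:ℝ) ≤ (k:ℝ) := by exact_mod_cast hk
  have hBpos := Bi_pos l k 1 (le_trans one_le_two hl)
  have h := Bi_succ l k 1 hl
  have e : Bi l k 1 * ((((1:ℕ):ℝ)*(l:ℝ)+1)/((l:ℝ)*(((1:ℕ):ℝ)+1))) *
      ((((1:ℕ):ℝ)+1/2)/(((1:ℕ):ℝ)+1/2+((k:ℝ)+1)+3/(2*(l:ℝ))))
      = Bi l k 1 * (((l:ℝ)+1)/(2*(l:ℝ))) * ((3/2)/(3/2+((k:ℝ)+1)+3/(2*(l:ℝ)))) := by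
    push_cast; ring_nf
  rw [show ((2:ℕ)) = 1+1 from rfl, h, e]
  have r1 : ((l:ℝ)+1)/(2*(l:ℝ)) ≤ 3/4 := by
    rw [div_le_div_iff₀ (by positivity) (by norm_num)]; nlinarith
  have r2 : (3/2 : ℝ)/(3/2+((k:ℝ)+1)+3/(2*(l:ℝ))) ≤ 3/7 := by
    rw [div_le_div_iff₀ (by positivity) (by norm_num)]; nlinarith
  calc Bi l k 1 * (((l:ℝ)+1)/(2*(l:ℝ))) * ((3/2)/(3/2+((k:ℝ)+1)+3/(2*(l:ℝ))))
      ≤ Bi l k 1 * (3/4) * (3/7) := by gcongr <;> positivity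
    _ = 9/28 * Bi l k 1 := by ring

private theorem Bi_decay (l k : ℕ) (hl : 2 ≤ l) (hk : 1 ≤ k) :
    ∀ i, 2 ≤ i → Bi l k i ≤ (45/4)/((2*(i:ℝ)+1)*(2*(i:ℝ)+3)) * Bi l k 1 := by
  intro i
  induction i with
  | zero => omega
  | succ n ih =>
    intro hi
    rcases Nat.lt_or_ge n 2 with h2 | h2
    · have hn : n = 1 := by omega
      subst hn
      calc Bi l k 2 ≤ 9/28 * Bi l k 1 := Bi_two l k hl hk
        _ = (45/4)/((2*((2:ℕ):ℝ)+1)*(2*((2:ℕ):ℝ)+3)) * Bi l k 1 := by norm_num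
    · have hn1 : 1 ≤ n := by omega
      have step := Bi_ratio l k n hl hk hn1
      have ihn := ih h2
      have hBpos := Bi_pos l k 1 (le_trans one_le_two hl)
      have hBn := Bi_pos l k n (le_trans one_le_two hl)
      calc Bi l k (n+1) ≤ (2*(n:ℝ)+1)/(2*(n:ℝ)+5) * Bi l k n := step
        _ ≤ (2*(n:ℝ)+1)/(2*(n:ℝ)+5) * ((45/4)/((2*(n:ℝ)+1)*(2*(n:ℝ)+3)) * Bi l k 1) := by
            gcongr
        _ = (45/4)/((2*(n:ℝ)+3)*(2*(n:ℝ)+5)) * Bi l k 1 := by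
            have d1 : (2*(n:ℝ)+1) ≠ 0 := by positivity
            have d2 : (2*(n:ℝ)+3) ≠ 0 := by positivity
            have d3 : (2*(n:ℝ)+5) ≠ 0 := by positivity
            field_simp
        _ = (45/4)/((2*((n+1:ℕ):ℝ)+1)*(2*((n+1:ℕ):ℝ)+3)) * Bi l k 1 := by
            push_cast; ring_nf

private theorem sum_Bi_le (l k : ℕ) (hl : 2 ≤ l) (hk : 1 ≤ k) :
    ∀ n, 1 ≤ n → ∑ i ∈ Finset.Icc 1 n, Bi l k i
      ≤ (17/8 - (45/8)/(2*(n:ℝ)+3)) * Bi l k 1 := by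
  intro n
  induction n with
  | zero => omega
  | succ n ih =>
    intro hn
    rcases Nat.lt_or_ge n 1 with h1 | h1
    · have hn0 : n = 0 := by omega
      subst hn0
      simp only [Finset.Icc_self, Finset.sum_singleton]
      have hBpos := Bi_pos l k 1 (le_trans one_le_two hl)
      have : (17/8 - (45/8)/(2*((1:ℕ):ℝ)+3)) = 1 := by norm_num
      rw [this, one_mul]
    · have hsum := Finset.sum_Icc_succ_top (by omega : 1 ≤ n+1) (Bi l k)
      rw [hsum]
      have hdec := Bi_decay l k hl hk (n+1) (by omega)
      have ihn := ih h1
      have hBpos := Bi_pos l k 1 (le_trans one_le_two hl)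
      have key : (17/8 - (45/8)/(2*(n:ℝ)+3)) + (45/4)/((2*((n+1:ℕ):ℝ)+1)*(2*((n+1:ℕ):ℝ)+3))
          = (17/8 - (45/8)/(2*((n+1:ℕ):ℝ)+3)) := by
        push_cast
        have d1 : (2*(n:ℝ)+3) ≠ 0 := by positivity
        have d2 : (2*((n:ℝ)+1)+1) ≠ 0 := by positivity
        have d3 : (2*((n:ℝ)+1)+3) ≠ 0 := by positivity
        field_simp
        ring
      calc ∑ i ∈ Finset.Icc 1 n, Bi l k i + Bi l k (n+1)
          ≤ (17/8 - (45/8)/(2*(n:ℝ)+3)) * Bi l k 1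
            + (45/4)/((2*((n+1:ℕ):ℝ)+1)*(2*((n+1:ℕ):ℝ)+3)) * Bi l k 1 := by
            exact add_le_add ihn hdec
        _ = ((17/8 - (45/8)/(2*(n:ℝ)+3)) + (45/4)/((2*((n+1:ℕ):ℝ)+1)*(2*((n+1:ℕ):ℝ)+3)))
            * Bi l k 1 := by ring
        _ = (17/8 - (45/8)/(2*((n+1:ℕ):ℝ)+3)) * Bi l k 1 := by rw [key]

private theorem B1_eq (l k : ℕ) (hl : 2 ≤ l) :
    Bi l k 1 = Cc l k *
      (mStar l k * (l:ℝ)^(k:ℕ) * (∏ j ∈ Finset.range (k+1), (3/(2*(l:ℝ)) + (j:ℝ))) /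
        ((∏ j ∈ Finset.range k, (3/2 + (j:ℝ))) * ((k:ℝ)+3/2+3/(2*(l:ℝ))))) := by
  have hL0 : (0:ℝ) < (l:ℝ) := by
    exact_mod_cast Nat.lt_of_lt_of_le Nat.zero_lt_two hl
  have hs : (0:ℝ) < 3/(2*(l:ℝ)) := by positivity
  have e1 : ((((2*1:ℕ)):ℝ)+1)/2 = (3:ℝ)/2 := by norm_num
  have e2 : ((((2*(k+1)*l+2:ℕ)):ℝ)+1)/(2*(l:ℝ)) = 3/(2*(l:ℝ)) + ((k+1:ℕ):ℝ) := by
    push_cast; field_simp; ring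
  have e4 : ((((2*k+2:ℕ)):ℝ)+1)/2 = 3/2 + ((k:ℕ):ℝ) := by push_cast; ring
  have e5 : ((((2:ℕ)):ℝ)+1)/(2*(l:ℝ)) = 3/(2*(l:ℝ)) := by norm_num
  have hPp1 : Pp l 1 = 1 := by unfold Pp; simp
  have hfac1 : ((Nat.factorial 1 : ℕ):ℝ) = 1 := by norm_num
  unfold Bi Cc Ii
  rw [e1, e2, e4, e5, hPp1, hfac1]
  -- Gamma rewrites
  rw [gamma_shift _ hs (k+1)]
  have e3 : (3:ℝ)/2 + (3/(2*(l:ℝ)) + ((k+1:ℕ):ℝ)) = ((k:ℝ)+3/2+3/(2*(l:ℝ)))+1 := by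
    push_cast; ring
  rw [e3, Real.Gamma_add_one (by positivity)]
  rw [show (3:ℝ)/2 + ((k:ℕ):ℝ) = (3:ℝ)/2 + ((k:ℕ):ℝ) from rfl]
  rw [gamma_shift ((3:ℝ)/2) (by norm_num) k]
  have e6 : (3:ℝ)/2 + ((k:ℕ):ℝ) + 3/(2*(l:ℝ)) = (k:ℝ)+3/2+3/(2*(l:ℝ)) := by push_cast; ring
  rw [e6]
  have hpow : (l:ℝ) ^ ((3:ℝ)/2 + ((k:ℕ):ℝ)) = (l:ℝ)^((3:ℝ)/2) * (l:ℝ)^(k:ℕ) := by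
    rw [Real.rpow_add hL0, Real.rpow_natCast]
  rw [hpow]
  have g1 : (0:ℝ) < Real.Gamma (3/2) := Real.Gamma_pos_of_pos (by norm_num)
  have g2 : (0:ℝ) < Real.Gamma (3/(2*(l:ℝ))) := Real.Gamma_pos_of_pos hs
  have g3 : (0:ℝ) < Real.Gamma ((k:ℝ)+3/2+3/(2*(l:ℝ))) := Real.Gamma_pos_of_pos (by positivity)
  have p1 : (0:ℝ) < ∏ j ∈ Finset.range k, (3/2 + (j:ℝ)) :=
    Finset.prod_pos fun j _ => by positivity
  have p2 : (0:ℝ) < ∏ j ∈ Finset.range (k+1), (3/(2*(l:ℝ)) + (j:ℝ)) :=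
    Finset.prod_pos fun j _ => by positivity
  have hx : (0:ℝ) < (k:ℝ)+3/2+3/(2*(l:ℝ)) := by positivity
  have hr1 : (0:ℝ) < (l:ℝ)^((3:ℝ)/2) := Real.rpow_pos_of_pos hL0 _
  have hr2 : (0:ℝ) < (l:ℝ)^(k:ℕ) := by positivity
  have hPpos := Pp_pos l (2*k+1)
  have hfpos : (0:ℝ) < ((Nat.factorial (2*k+1):ℕ):ℝ) := by positivity
  field_simp

private theorem R1_le (l k : ℕ) (hl : 2 ≤ l) (hk : 1 ≤ k) :
    mStar l k * (l:ℝ)^(k:ℕ) * (∏ j ∈ Finset.range (k+1), (3/(2*(l:ℝ)) + (j:ℝ))) /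
      ((∏ j ∈ Finset.range k, (3/2 + (j:ℝ))) * ((k:ℝ)+3/2+3/(2*(l:ℝ)))) ≤ 1/3 := by
  have hL : (2:ℝ) ≤ (l:ℝ) := by exact_mod_cast hl
  have hL0 : (0:ℝ) < (l:ℝ) := by linarith
  have hs : (0:ℝ) < 3/(2*(l:ℝ)) := by positivity
  have hs34 : 3/(2*(l:ℝ)) ≤ 3/4 := by
    rw [div_le_div_iff₀ (by positivity) (by norm_num)]; linarith
  have hx : (0:ℝ) < (k:ℝ)+3/2+3/(2*(l:ℝ)) := by positivity
  have hm : mStar l k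
      = ∏ j ∈ Finset.range k, ((2*(((j+1:ℕ)):ℝ)+1)/(2*(((j+1:ℕ)):ℝ)*(l:ℝ)+1)) := by
    unfold mStar
    rw [Finset.prod_range_succ']
    norm_num
  have hp : (∏ j ∈ Finset.range (k+1), (3/(2*(l:ℝ)) + (j:ℝ)))
      = (∏ j ∈ Finset.range k, (3/(2*(l:ℝ)) + (((j+1:ℕ)):ℝ))) * (3/(2*(l:ℝ))) := by
    rw [Finset.prod_range_succ']
    norm_num
  have hLk : (l:ℝ)^(k:ℕ) = ∏ _j ∈ Finset.range k, (l:ℝ) := by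
    rw [Finset.prod_const, Finset.card_range]
  have hstep : mStar l k * (l:ℝ)^(k:ℕ) * (∏ j ∈ Finset.range (k+1), (3/(2*(l:ℝ)) + (j:ℝ)))
      = (∏ j ∈ Finset.range k, ((2*(((j+1:ℕ)):ℝ)+1)/(2*(((j+1:ℕ)):ℝ)*(l:ℝ)+1) * (l:ℝ) *
          (3/(2*(l:ℝ)) + (((j+1:ℕ)):ℝ)))) * (3/(2*(l:ℝ))) := by
    rw [hm, hp, hLk, ← Finset.prod_mul_distrib, ← mul_assoc, ← Finset.prod_mul_distrib]
  rw [hstep]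
  have hmain : (∏ j ∈ Finset.range k, ((2*(((j+1:ℕ)):ℝ)+1)/(2*(((j+1:ℕ)):ℝ)*(l:ℝ)+1) * (l:ℝ) *
          (3/(2*(l:ℝ)) + (((j+1:ℕ)):ℝ)))) * (3/(2*(l:ℝ))) /
      ((∏ j ∈ Finset.range k, (3/2 + (j:ℝ))) * ((k:ℝ)+3/2+3/(2*(l:ℝ))))
      = (∏ j ∈ Finset.range k, ((2*((j:ℝ)+1)*(l:ℝ)+3)/(2*((j:ℝ)+1)*(l:ℝ)+1))) *
        ((3/(2*(l:ℝ))) / ((k:ℝ)+3/2+3/(2*(l:ℝ)))) := by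
    have hprodeq : (∏ j ∈ Finset.range k, ((2*(((j+1:ℕ)):ℝ)+1)/(2*(((j+1:ℕ)):ℝ)*(l:ℝ)+1) * (l:ℝ) *
          (3/(2*(l:ℝ)) + (((j+1:ℕ)):ℝ))))
        = ∏ j ∈ Finset.range k, (((2*((j:ℝ)+1)*(l:ℝ)+3)/(2*((j:ℝ)+1)*(l:ℝ)+1)) * (3/2 + (j:ℝ))) := by
      apply Finset.prod_congr rfl
      intro j _
      have d1 : (2*((j:ℝ)+1)*(l:ℝ)+1) ≠ 0 := by positivity
      push_cast
      field_simp
      ring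
    rw [hprodeq, Finset.prod_mul_distrib]
    have hQ : (∏ j ∈ Finset.range k, ((3:ℝ)/2 + (j:ℝ))) ≠ 0 :=
      ne_of_gt (Finset.prod_pos fun j _ => by positivity)
    have hZ : ((k:ℝ)+3/2+3/(2*(l:ℝ))) ≠ 0 := ne_of_gt hx
    field_simp
    ring_nf
    apply Finset.prod_congr rfl
    intro x _
    ring
  rw [hmain]
  have b1 : ∏ j ∈ Finset.range k, ((2*((j:ℝ)+1)*(l:ℝ)+3)/(2*((j:ℝ)+1)*(l:ℝ)+1))
      ≤ (4*(k:ℝ)+9)/9 := by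
    refine le_trans (Finset.prod_le_prod (fun j _ => by positivity) (fun j _ => ?_)) (Qbound k)
    rw [div_le_div_iff₀ (by positivity) (by positivity)]
    nlinarith [Nat.cast_nonneg (α := ℝ) j]
  have b2 : (3/(2*(l:ℝ))) / ((k:ℝ)+3/2+3/(2*(l:ℝ))) ≤ 3/(4*(k:ℝ)+9) := by
    rw [div_le_div_iff₀ hx (by positivity)]
    have hkr : (0:ℝ) ≤ (k:ℝ) := Nat.cast_nonneg k
    nlinarith
  calc (∏ j ∈ Finset.range k, ((2*((j:ℝ)+1)*(l:ℝ)+3)/(2*((j:ℝ)+1)*(l:ℝ)+1))) *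
        ((3/(2*(l:ℝ))) / ((k:ℝ)+3/2+3/(2*(l:ℝ))))
      ≤ ((4*(k:ℝ)+9)/9) * (3/(4*(k:ℝ)+9)) := by
        apply mul_le_mul b1 b2 (by positivity) (by positivity)
    _ = 1/3 := by
        have : (4*(k:ℝ)+9) ≠ 0 := by positivity
        field_simp
        ring

private theorem B1_le (l k : ℕ) (hl : 2 ≤ l) (hk : 1 ≤ k) :
    Bi l k 1 ≤ 1/3 * Cc l k := by
  rw [B1_eq l k hl]
  have hC := Cc_pos l k (le_trans one_le_two hl)
  have hR := R1_le l k hl hk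
  calc Cc l k * (mStar l k * (l:ℝ)^(k:ℕ) * (∏ j ∈ Finset.range (k+1), (3/(2*(l:ℝ)) + (j:ℝ))) /
        ((∏ j ∈ Finset.range k, (3/2 + (j:ℝ))) * ((k:ℝ)+3/2+3/(2*(l:ℝ)))))
      ≤ Cc l k * (1/3) := by
        apply mul_le_mul_of_nonneg_left hR (le_of_lt hC)
    _ = 1/3 * Cc l k := by ring

private theorem Aa_eq (l k : ℕ) (hl : 2 ≤ l) :
    (l:ℝ) * mStar l k ^ 2 * Ii l (2*k+2) (2*(2*k+1)*l+2)
      = Cc l k * ((l:ℝ) * mStar l k^2 * (Pp l (2*k+1)/((Nat.factorial (2*k+1):ℕ):ℝ)) *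
        ((∏ j ∈ Finset.range (2*k+1), (3/(2*(l:ℝ)) + (j:ℝ))) /
         (∏ j ∈ Finset.range (2*k+1), ((k:ℝ)+3/2+3/(2*(l:ℝ)) + (j:ℝ))))) := by
  have hL0 : (0:ℝ) < (l:ℝ) := by
    exact_mod_cast Nat.lt_of_lt_of_le Nat.zero_lt_two hl
  have hs : (0:ℝ) < 3/(2*(l:ℝ)) := by positivity
  have e4 : ((((2*k+2:ℕ)):ℝ)+1)/2 = 3/2 + ((k:ℕ):ℝ) := by push_cast; ring
  have e5 : ((((2:ℕ)):ℝ)+1)/(2*(l:ℝ)) = 3/(2*(l:ℝ)) := by norm_num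
  have e8 : ((((2*(2*k+1)*l+2:ℕ)):ℝ)+1)/(2*(l:ℝ)) = 3/(2*(l:ℝ)) + ((2*k+1:ℕ):ℝ) := by
    push_cast; field_simp; ring
  unfold Cc Ii
  rw [e4, e5, e8]
  rw [gamma_shift _ hs (2*k+1)]
  have e9 : (3/2 + ((k:ℕ):ℝ)) + (3/(2*(l:ℝ)) + ((2*k+1:ℕ):ℝ))
      = ((k:ℝ)+3/2+3/(2*(l:ℝ))) + ((2*k+1:ℕ):ℝ) := by push_cast; ring
  rw [e9, gamma_shift ((k:ℝ)+3/2+3/(2*(l:ℝ))) (by positivity) (2*k+1)]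
  have e6 : (3:ℝ)/2 + ((k:ℕ):ℝ) + 3/(2*(l:ℝ)) = (k:ℝ)+3/2+3/(2*(l:ℝ)) := by push_cast; ring
  rw [e6]
  have g1 : (0:ℝ) < Real.Gamma (3/2 + ((k:ℕ):ℝ)) := Real.Gamma_pos_of_pos (by positivity)
  have g2 : (0:ℝ) < Real.Gamma (3/(2*(l:ℝ))) := Real.Gamma_pos_of_pos hs
  have g3 : (0:ℝ) < Real.Gamma ((k:ℝ)+3/2+3/(2*(l:ℝ))) := Real.Gamma_pos_of_pos (by positivity)
  have p2 : (0:ℝ) < ∏ j ∈ Finset.range (2*k+1), ((k:ℝ)+3/2+3/(2*(l:ℝ)) + (j:ℝ)) :=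
    Finset.prod_pos fun j _ => by positivity
  have hr1 : (0:ℝ) < (l:ℝ)^((3:ℝ)/2 + ((k:ℕ):ℝ)) := Real.rpow_pos_of_pos hL0 _
  have hPpos := Pp_pos l (2*k+1)
  have hfpos : (0:ℝ) < ((Nat.factorial (2*k+1):ℕ):ℝ) := by positivity
  field_simp

private theorem T_le (l k : ℕ) (hl : 2 ≤ l) (hk : 1 ≤ k) :
    (l:ℝ) * mStar l k^2 * (Pp l (2*k+1)/((Nat.factorial (2*k+1):ℕ):ℝ)) *
      ((∏ j ∈ Finset.range (2*k+1), (3/(2*(l:ℝ)) + (j:ℝ))) /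
       (∏ j ∈ Finset.range (2*k+1), ((k:ℝ)+3/2+3/(2*(l:ℝ)) + (j:ℝ)))) ≤ 1/5 := by
  have hL : (2:ℝ) ≤ (l:ℝ) := by exact_mod_cast hl
  have hL0 : (0:ℝ) < (l:ℝ) := by linarith
  have hs : (0:ℝ) < 3/(2*(l:ℝ)) := by positivity
  have hs34 : 3/(2*(l:ℝ)) ≤ 3/4 := by
    rw [div_le_div_iff₀ (by positivity) (by norm_num)]; linarith
  have hkr : (1:ℝ) ≤ (k:ℝ) := by exact_mod_cast hk
  have hu : mStar l k ^ 2
      = ∏ j ∈ Finset.range (k+1), ((2*(j:ℝ)+1)/(2*(j:ℝ)*(l:ℝ)+1))^2 := by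
    unfold mStar; rw [Finset.prod_pow]
  have hv : Pp l (2*k+1)/((Nat.factorial (2*k+1):ℕ):ℝ)
      = ∏ j ∈ Finset.range (2*k+1), (((j:ℝ)*(l:ℝ)+1)/((j:ℝ)+1)) := by
    unfold Pp; rw [fact_prod, ← Finset.prod_div_distrib]
  have hw : (∏ j ∈ Finset.range (2*k+1), (3/(2*(l:ℝ)) + (j:ℝ))) /
       (∏ j ∈ Finset.range (2*k+1), ((k:ℝ)+3/2+3/(2*(l:ℝ)) + (j:ℝ)))
      = ∏ j ∈ Finset.range (2*k+1),
          ((3/(2*(l:ℝ)) + (j:ℝ))/((k:ℝ)+3/2+3/(2*(l:ℝ)) + (j:ℝ))) := by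
    rw [← Finset.prod_div_distrib]
  -- split products
  have hsplitu : (∏ j ∈ Finset.range (k+1), ((2*(j:ℝ)+1)/(2*(j:ℝ)*(l:ℝ)+1))^2)
      = (∏ j ∈ Finset.range k, ((2*(((j+1:ℕ)):ℝ)+1)/(2*(((j+1:ℕ)):ℝ)*(l:ℝ)+1))^2) *
        ((2*(((0:ℕ)):ℝ)+1)/(2*(((0:ℕ)):ℝ)*(l:ℝ)+1))^2 :=
    Finset.prod_range_succ' _ k
  have hu0 : ((2*(((0:ℕ)):ℝ)+1)/(2*(((0:ℕ)):ℝ)*(l:ℝ)+1))^2 = 1 := by norm_num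
  have hsplitvw : (∏ j ∈ Finset.range (2*k+1),
        ((((j:ℝ)*(l:ℝ)+1)/((j:ℝ)+1)) * ((3/(2*(l:ℝ)) + (j:ℝ))/((k:ℝ)+3/2+3/(2*(l:ℝ)) + (j:ℝ)))))
      = (∏ j ∈ Finset.range (2*k),
          (((((j+1:ℕ)):ℝ)*(l:ℝ)+1)/((((j+1:ℕ)):ℝ)+1) *
            ((3/(2*(l:ℝ)) + (((j+1:ℕ)):ℝ))/((k:ℝ)+3/2+3/(2*(l:ℝ)) + (((j+1:ℕ)):ℝ))))) *
        (((((0:ℕ)):ℝ)*(l:ℝ)+1)/((((0:ℕ)):ℝ)+1) *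
            ((3/(2*(l:ℝ)) + (((0:ℕ)):ℝ))/((k:ℝ)+3/2+3/(2*(l:ℝ)) + (((0:ℕ)):ℝ)))) :=
    Finset.prod_range_succ' _ (2*k)
  have hvw0 : (((((0:ℕ)):ℝ)*(l:ℝ)+1)/((((0:ℕ)):ℝ)+1) *
            ((3/(2*(l:ℝ)) + (((0:ℕ)):ℝ))/((k:ℝ)+3/2+3/(2*(l:ℝ)) + (((0:ℕ)):ℝ))))
      = 3/(2*(l:ℝ))/((k:ℝ)+3/2+3/(2*(l:ℝ))) := by norm_num
  have h2k : Finset.range (2*k) = Finset.range (k+k) := by rw [two_mul]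
  have hsplit2 : (∏ j ∈ Finset.range (2*k),
          (((((j+1:ℕ)):ℝ)*(l:ℝ)+1)/((((j+1:ℕ)):ℝ)+1) *
            ((3/(2*(l:ℝ)) + (((j+1:ℕ)):ℝ))/((k:ℝ)+3/2+3/(2*(l:ℝ)) + (((j+1:ℕ)):ℝ)))))
      = (∏ j ∈ Finset.range k,
          (((((j+1:ℕ)):ℝ)*(l:ℝ)+1)/((((j+1:ℕ)):ℝ)+1) *
            ((3/(2*(l:ℝ)) + (((j+1:ℕ)):ℝ))/((k:ℝ)+3/2+3/(2*(l:ℝ)) + (((j+1:ℕ)):ℝ))))) *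
        (∏ j ∈ Finset.range k,
          (((((k+j+1:ℕ)):ℝ)*(l:ℝ)+1)/((((k+j+1:ℕ)):ℝ)+1) *
            ((3/(2*(l:ℝ)) + (((k+j+1:ℕ)):ℝ))/((k:ℝ)+3/2+3/(2*(l:ℝ)) + (((k+j+1:ℕ)):ℝ))))) := by
    rw [h2k, Finset.prod_range_add]
  -- clean factor form
  have hfc : (∏ j ∈ Finset.range k, ((2*(((j+1:ℕ)):ℝ)+1)/(2*(((j+1:ℕ)):ℝ)*(l:ℝ)+1))^2) *
        ((∏ j ∈ Finset.range k,
          (((((j+1:ℕ)):ℝ)*(l:ℝ)+1)/((((j+1:ℕ)):ℝ)+1) *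
            ((3/(2*(l:ℝ)) + (((j+1:ℕ)):ℝ))/((k:ℝ)+3/2+3/(2*(l:ℝ)) + (((j+1:ℕ)):ℝ))))) *
        (∏ j ∈ Finset.range k,
          (((((k+j+1:ℕ)):ℝ)*(l:ℝ)+1)/((((k+j+1:ℕ)):ℝ)+1) *
            ((3/(2*(l:ℝ)) + (((k+j+1:ℕ)):ℝ))/((k:ℝ)+3/2+3/(2*(l:ℝ)) + (((k+j+1:ℕ)):ℝ))))))
      = ∏ j ∈ Finset.range k,
          (((2*((j:ℝ)+1)+1)/(2*((j:ℝ)+1)*(l:ℝ)+1))^2 *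
            ((((j:ℝ)+1)*(l:ℝ)+1)/(((j:ℝ)+1)+1)) *
            ((3/(2*(l:ℝ))+((j:ℝ)+1))/((k:ℝ)+3/2+3/(2*(l:ℝ))+((j:ℝ)+1))) *
            (((((j:ℝ)+1)+(k:ℝ))*(l:ℝ)+1)/(((j:ℝ)+1)+(k:ℝ)+1)) *
            ((3/(2*(l:ℝ))+((j:ℝ)+1)+(k:ℝ))/((k:ℝ)+3/2+3/(2*(l:ℝ))+((j:ℝ)+1)+(k:ℝ)))) := by
    rw [← Finset.prod_mul_distrib, ← Finset.prod_mul_distrib]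
    apply Finset.prod_congr rfl
    intro j _
    push_cast
    ring
  have hprodle : (∏ j ∈ Finset.range k,
          (((2*((j:ℝ)+1)+1)/(2*((j:ℝ)+1)*(l:ℝ)+1))^2 *
            ((((j:ℝ)+1)*(l:ℝ)+1)/(((j:ℝ)+1)+1)) *
            ((3/(2*(l:ℝ))+((j:ℝ)+1))/((k:ℝ)+3/2+3/(2*(l:ℝ))+((j:ℝ)+1))) *
            (((((j:ℝ)+1)+(k:ℝ))*(l:ℝ)+1)/(((j:ℝ)+1)+(k:ℝ)+1)) *
            ((3/(2*(l:ℝ))+((j:ℝ)+1)+(k:ℝ))/((k:ℝ)+3/2+3/(2*(l:ℝ))+((j:ℝ)+1)+(k:ℝ)))))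
      ≤ (1/3:ℝ)^k := by
    have := Finset.prod_le_prod (s := Finset.range k)
      (f := fun (j:ℕ) => (((2*((j:ℝ)+1)+1)/(2*((j:ℝ)+1)*(l:ℝ)+1))^2 *
            ((((j:ℝ)+1)*(l:ℝ)+1)/(((j:ℝ)+1)+1)) *
            ((3/(2*(l:ℝ))+((j:ℝ)+1))/((k:ℝ)+3/2+3/(2*(l:ℝ))+((j:ℝ)+1))) *
            (((((j:ℝ)+1)+(k:ℝ))*(l:ℝ)+1)/(((j:ℝ)+1)+(k:ℝ)+1)) *
            ((3/(2*(l:ℝ))+((j:ℝ)+1)+(k:ℝ))/((k:ℝ)+3/2+3/(2*(l:ℝ))+((j:ℝ)+1)+(k:ℝ)))))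
      (g := fun _ => (1/3:ℝ)) ?_ ?_
    · simpa using this
    · intro j _; positivity
    · intro j hj
      have hj1 : (1:ℝ) ≤ (j:ℝ)+1 := by
        have := Nat.cast_nonneg (α := ℝ) j; linarith
      have hjk : (j:ℝ)+1 ≤ (k:ℝ) := by
        have : j+1 ≤ k := Finset.mem_range.mp hj
        exact_mod_cast this
      have hb := bracket_le ((j:ℝ)+1) (k:ℝ) (l:ℝ) (3/(2*(l:ℝ))) hj1 hjk hL hs hs34
      calc ((2*((j:ℝ)+1)+1)/(2*((j:ℝ)+1)*(l:ℝ)+1))^2 *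
            ((((j:ℝ)+1)*(l:ℝ)+1)/(((j:ℝ)+1)+1)) *
            ((3/(2*(l:ℝ))+((j:ℝ)+1))/((k:ℝ)+3/2+3/(2*(l:ℝ))+((j:ℝ)+1))) *
            (((((j:ℝ)+1)+(k:ℝ))*(l:ℝ)+1)/(((j:ℝ)+1)+(k:ℝ)+1)) *
            ((3/(2*(l:ℝ))+((j:ℝ)+1)+(k:ℝ))/((k:ℝ)+3/2+3/(2*(l:ℝ))+((j:ℝ)+1)+(k:ℝ)))
          = ((2*((j:ℝ)+1)+1)/(2*((j:ℝ)+1)*(l:ℝ)+1))^2 *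
            ((((j:ℝ)+1)*(l:ℝ)+1)/(((j:ℝ)+1)+1)) *
            ((3/(2*(l:ℝ))+((j:ℝ)+1))/((k:ℝ)+3/2+3/(2*(l:ℝ))+((j:ℝ)+1))) *
            (((((j:ℝ)+1)+(k:ℝ))*(l:ℝ)+1)/(((j:ℝ)+1)+(k:ℝ)+1)) *
            ((3/(2*(l:ℝ))+((j:ℝ)+1)+(k:ℝ))/((k:ℝ)+3/2+3/(2*(l:ℝ))+((j:ℝ)+1)+(k:ℝ))) := rfl
        _ ≤ 1/3 := by
            convert hb using 2 <;> ring
  -- assemble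
  rw [hu, hv, hw]
  have hassoc : (l:ℝ) * (∏ j ∈ Finset.range (k+1), ((2*(j:ℝ)+1)/(2*(j:ℝ)*(l:ℝ)+1))^2) *
      (∏ j ∈ Finset.range (2*k+1), (((j:ℝ)*(l:ℝ)+1)/((j:ℝ)+1))) *
      (∏ j ∈ Finset.range (2*k+1),
          ((3/(2*(l:ℝ)) + (j:ℝ))/((k:ℝ)+3/2+3/(2*(l:ℝ)) + (j:ℝ))))
      = (l:ℝ) * (∏ j ∈ Finset.range (k+1), ((2*(j:ℝ)+1)/(2*(j:ℝ)*(l:ℝ)+1))^2) *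
        (∏ j ∈ Finset.range (2*k+1),
          ((((j:ℝ)*(l:ℝ)+1)/((j:ℝ)+1)) * ((3/(2*(l:ℝ)) + (j:ℝ))/((k:ℝ)+3/2+3/(2*(l:ℝ)) + (j:ℝ))))) := by
    rw [Finset.prod_mul_distrib]; ring
  rw [hassoc, hsplitu, hu0, mul_one, hsplitvw, hvw0, hsplit2]
  have hfinal : (l:ℝ) * (∏ j ∈ Finset.range k, ((2*(((j+1:ℕ)):ℝ)+1)/(2*(((j+1:ℕ)):ℝ)*(l:ℝ)+1))^2) *
      ((∏ j ∈ Finset.range k,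
          (((((j+1:ℕ)):ℝ)*(l:ℝ)+1)/((((j+1:ℕ)):ℝ)+1) *
            ((3/(2*(l:ℝ)) + (((j+1:ℕ)):ℝ))/((k:ℝ)+3/2+3/(2*(l:ℝ)) + (((j+1:ℕ)):ℝ))))) *
        (∏ j ∈ Finset.range k,
          (((((k+j+1:ℕ)):ℝ)*(l:ℝ)+1)/((((k+j+1:ℕ)):ℝ)+1) *
            ((3/(2*(l:ℝ)) + (((k+j+1:ℕ)):ℝ))/((k:ℝ)+3/2+3/(2*(l:ℝ)) + (((k+j+1:ℕ)):ℝ))))) *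
        (3/(2*(l:ℝ))/((k:ℝ)+3/2+3/(2*(l:ℝ)))))
      = ((l:ℝ) * (3/(2*(l:ℝ))/((k:ℝ)+3/2+3/(2*(l:ℝ))))) *
        ((∏ j ∈ Finset.range k, ((2*(((j+1:ℕ)):ℝ)+1)/(2*(((j+1:ℕ)):ℝ)*(l:ℝ)+1))^2) *
        ((∏ j ∈ Finset.range k,
          (((((j+1:ℕ)):ℝ)*(l:ℝ)+1)/((((j+1:ℕ)):ℝ)+1) *
            ((3/(2*(l:ℝ)) + (((j+1:ℕ)):ℝ))/((k:ℝ)+3/2+3/(2*(l:ℝ)) + (((j+1:ℕ)):ℝ))))) *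
        (∏ j ∈ Finset.range k,
          (((((k+j+1:ℕ)):ℝ)*(l:ℝ)+1)/((((k+j+1:ℕ)):ℝ)+1) *
            ((3/(2*(l:ℝ)) + (((k+j+1:ℕ)):ℝ))/((k:ℝ)+3/2+3/(2*(l:ℝ)) + (((k+j+1:ℕ)):ℝ))))))) := by
    ring
  rw [hfinal, hfc]
  have hpref : (l:ℝ) * (3/(2*(l:ℝ))/((k:ℝ)+3/2+3/(2*(l:ℝ)))) ≤ 3/5 := by
    have heq : (l:ℝ) * (3/(2*(l:ℝ))/((k:ℝ)+3/2+3/(2*(l:ℝ)))) = (3/2)/((k:ℝ)+3/2+3/(2*(l:ℝ))) := by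
      field_simp
    rw [heq, div_le_div_iff₀ (by positivity) (by norm_num)]
    nlinarith
  have hpow : ((1:ℝ)/3)^k ≤ 1/3 := by
    calc ((1:ℝ)/3)^k ≤ ((1:ℝ)/3)^1 := by
          apply pow_le_pow_of_le_one (by norm_num) (by norm_num) hk
      _ = 1/3 := by norm_num
  have hprodnonneg : (0:ℝ) ≤ ∏ j ∈ Finset.range k,
          (((2*((j:ℝ)+1)+1)/(2*((j:ℝ)+1)*(l:ℝ)+1))^2 *
            ((((j:ℝ)+1)*(l:ℝ)+1)/(((j:ℝ)+1)+1)) *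
            ((3/(2*(l:ℝ))+((j:ℝ)+1))/((k:ℝ)+3/2+3/(2*(l:ℝ))+((j:ℝ)+1))) *
            (((((j:ℝ)+1)+(k:ℝ))*(l:ℝ)+1)/(((j:ℝ)+1)+(k:ℝ)+1)) *
            ((3/(2*(l:ℝ))+((j:ℝ)+1)+(k:ℝ))/((k:ℝ)+3/2+3/(2*(l:ℝ))+((j:ℝ)+1)+(k:ℝ)))) :=
    Finset.prod_nonneg fun j _ => by positivity
  calc ((l:ℝ) * (3/(2*(l:ℝ))/((k:ℝ)+3/2+3/(2*(l:ℝ))))) *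
        (∏ j ∈ Finset.range k,
          (((2*((j:ℝ)+1)+1)/(2*((j:ℝ)+1)*(l:ℝ)+1))^2 *
            ((((j:ℝ)+1)*(l:ℝ)+1)/(((j:ℝ)+1)+1)) *
            ((3/(2*(l:ℝ))+((j:ℝ)+1))/((k:ℝ)+3/2+3/(2*(l:ℝ))+((j:ℝ)+1))) *
            (((((j:ℝ)+1)+(k:ℝ))*(l:ℝ)+1)/(((j:ℝ)+1)+(k:ℝ)+1)) *
            ((3/(2*(l:ℝ))+((j:ℝ)+1)+(k:ℝ))/((k:ℝ)+3/2+3/(2*(l:ℝ))+((j:ℝ)+1)+(k:ℝ)))))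
      ≤ (3/5) * ((1:ℝ)/3)^k := by
        apply mul_le_mul hpref hprodle hprodnonneg (by norm_num)
    _ ≤ (3/5) * (1/3) := by nlinarith
    _ ≤ 1/5 := by norm_num


/-- Proposition 3.2 (iii): −c₁⁰ − ∑_{i=1}^{2k+1} b₂ⁱ + c₂⁰ > 0. -/
theorem neg_c1_sub_sum_b2_add_c2_pos (l k : ℕ) (hl : 2 ≤ l) (hk : 1 ≤ k) :
    0 < -((l : ℝ) * mStar l k ^ 2 / Dd l k * Ii l (2 * k + 2) (2 * (2 * k + 1) * l + 2)) -
        (∑ i ∈ Finset.Icc 1 (2 * k + 1),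
          mStar l k / Dd l k * ((Nat.factorial (2 * k + 1) : ℝ) / Pp l (2 * k + 1)) *
            (Pp l i / (Nat.factorial i : ℝ)) * Ii l (2 * i) (2 * (k + 1) * l + 2)) +
        1 / Dd l k * ((Nat.factorial (2 * k + 1) : ℝ) / Pp l (2 * k + 1)) * Pp l 0 *
          Ii l (2 * k + 2) 2 := by
  have hl1 : 1 ≤ l := le_trans (by norm_num) hl
  have hD : (0:ℝ) < Dd l k := by unfold Dd; positivity
  have hCc := Cc_pos l k hl1
  have hPp0 : Pp l 0 = 1 := by unfold Pp; simp
  -- main inequality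
  have hAa_le : (l:ℝ) * mStar l k ^ 2 * Ii l (2*k+2) (2*(2*k+1)*l+2) ≤ 1/5 * Cc l k := by
    rw [Aa_eq l k hl]
    calc Cc l k * ((l:ℝ) * mStar l k^2 * (Pp l (2*k+1)/((Nat.factorial (2*k+1):ℕ):ℝ)) *
          ((∏ j ∈ Finset.range (2*k+1), (3/(2*(l:ℝ)) + (j:ℝ))) /
           (∏ j ∈ Finset.range (2*k+1), ((k:ℝ)+3/2+3/(2*(l:ℝ)) + (j:ℝ)))))
        ≤ Cc l k * (1/5) := mul_le_mul_of_nonneg_left (T_le l k hl hk) (le_of_lt hCc)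
      _ = 1/5 * Cc l k := by ring
  have hB1 := B1_le l k hl hk
  have hBpos := Bi_pos l k 1 hl1
  have hsum : ∑ i ∈ Finset.Icc 1 (2*k+1), Bi l k i ≤ 17/24 * Cc l k := by
    have h1 := sum_Bi_le l k hl hk (2*k+1) (by omega)
    have h2 : (0:ℝ) < 2*((2*k+1:ℕ):ℝ)+3 := by positivity
    have h3 : (0:ℝ) ≤ (45/8)/(2*((2*k+1:ℕ):ℝ)+3) := by positivity
    calc ∑ i ∈ Finset.Icc 1 (2*k+1), Bi l k i
        ≤ (17/8 - (45/8)/(2*((2*k+1:ℕ):ℝ)+3)) * Bi l k 1 := h1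
      _ ≤ 17/8 * Bi l k 1 := by nlinarith
      _ ≤ 17/8 * (1/3 * Cc l k) := by nlinarith
      _ = 17/24 * Cc l k := by ring
  have key : (l:ℝ)*mStar l k^2*Ii l (2*k+2) (2*(2*k+1)*l+2)
      + ∑ i ∈ Finset.Icc 1 (2*k+1), Bi l k i < Cc l k := by
    have : (1/5 : ℝ) * Cc l k + 17/24 * Cc l k < Cc l k := by nlinarith
    linarith
  have hsum_eq : ∑ i ∈ Finset.Icc 1 (2*k+1),
        mStar l k / Dd l k * ((Nat.factorial (2 * k + 1) : ℝ) / Pp l (2 * k + 1)) *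
          (Pp l i / (Nat.factorial i : ℝ)) * Ii l (2 * i) (2 * (k + 1) * l + 2)
      = (∑ i ∈ Finset.Icc 1 (2*k+1), Bi l k i) / Dd l k := by
    rw [Finset.sum_div]
    apply Finset.sum_congr rfl
    intro i _
    unfold Bi
    ring
  have expand : -((l : ℝ) * mStar l k ^ 2 / Dd l k * Ii l (2 * k + 2) (2 * (2 * k + 1) * l + 2)) -
        (∑ i ∈ Finset.Icc 1 (2 * k + 1),
          mStar l k / Dd l k * ((Nat.factorial (2 * k + 1) : ℝ) / Pp l (2 * k + 1)) *
            (Pp l i / (Nat.factorial i : ℝ)) * Ii l (2 * i) (2 * (k + 1) * l + 2)) +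
        1 / Dd l k * ((Nat.factorial (2 * k + 1) : ℝ) / Pp l (2 * k + 1)) * Pp l 0 *
          Ii l (2 * k + 2) 2
      = (Cc l k - ((l:ℝ)*mStar l k^2*Ii l (2*k+2) (2*(2*k+1)*l+2)
          + ∑ i ∈ Finset.Icc 1 (2*k+1), Bi l k i)) / Dd l k := by
    rw [hsum_eq, hPp0]
    unfold Cc
    ring
  rw [expand]
  apply div_pos _ hD
  linarith
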